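/- Let G = (V,E) be a finite simple graph on V = {1,…,n} with n ≥ 1, and for 0 ≤ k ≤ n let z^S_k(G) = z^S_{J_k}(G) where J_k = { I ⊆ V : |I| = k }. Then ϑ(G) = z^S_0(G) = z^S_1(G), z^S_{k-1}(G) ≥ z^S_k(G) for all 1 ≤ k ≤ n, and z^S_n(G) = α(G), where ϑ(G) denotes the optimal value of the semidefinite program sup{ ⟨J_{n×n}, X⟩ : X ∈ CTH²(G) }. -/

import Mathlib

open Matrix

noncomputable section

/-- A stable set vector of a graph `G`: a 0/1 vector with `s i * s j = 0` on edges. -/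
def IsStableVec {V : Type*} (G : SimpleGraph V) (s : V → ℝ) : Prop :=
  (∀ i, s i = 0 ∨ s i = 1) ∧ ∀ i j, G.Adj i j → s i * s j = 0

/-- The squared stable set polytope `STAB²(G) = conv{ s sᵀ : s ∈ S(G) }`. -/
def stab2 {V : Type*} (G : SimpleGraph V) : Set (Matrix V V ℝ) :=
  convexHull ℝ { M | ∃ s, IsStableVec G s ∧ M = Matrix.vecMulVec s s }

/-- The scaled squared stable set polytope
`SSTAB²(G) = conv({ (1/(sᵀs)) s sᵀ : s ∈ S(G), s ≠ 0 } ∪ {0})`. -/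
def sstab2 {V : Type*} [Fintype V] (G : SimpleGraph V) : Set (Matrix V V ℝ) :=
  convexHull ℝ
    ({ M | ∃ s, IsStableVec G s ∧ s ≠ 0 ∧
        M = (∑ k, s k * s k)⁻¹ • Matrix.vecMulVec s s } ∪ {(0 : Matrix V V ℝ)})

/-- The feasible region `TH²(G)` of the SDP (Tn+1): pairs `(x, X)` with `X` symmetric,
`diag X = x`, `X i j = 0` on edges and `X - x xᵀ` positive semidefinite. -/
def th2 {n : ℕ} (G : SimpleGraph (Fin n)) :
    Set ((Fin n → ℝ) × Matrix (Fin n) (Fin n) ℝ) :=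
  { p | p.2.IsSymm ∧ (∀ i, p.2 i i = p.1 i) ∧
      (∀ i j, G.Adj i j → p.2 i j = 0) ∧ (p.2 - Matrix.vecMulVec p.1 p.1).PosSemidef }

/-- The feasible region `CTH²(G)` of the SDP (Tn): symmetric PSD matrices with trace 1
vanishing on edges. -/
def cth2 {n : ℕ} (G : SimpleGraph (Fin n)) : Set (Matrix (Fin n) (Fin n) ℝ) :=
  { X | X.IsSymm ∧ X.trace = 1 ∧ (∀ i j, G.Adj i j → X i j = 0) ∧ X.PosSemidef }

/-- The principal submatrix `X_I` of `X` indexed by `I`. -/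
def subMat {n : ℕ} (X : Matrix (Fin n) (Fin n) ℝ) (I : Finset (Fin n)) :
    Matrix (I : Set (Fin n)) (I : Set (Fin n)) ℝ :=
  X.submatrix Subtype.val Subtype.val

/-- The exact subgraph constraint (ESC) for the subgraph of `G` induced by `I`. -/
def escFeas {n : ℕ} (G : SimpleGraph (Fin n)) (X : Matrix (Fin n) (Fin n) ℝ)
    (I : Finset (Fin n)) : Prop :=
  subMat X I ∈ stab2 (G.induce (I : Set (Fin n)))

/-- The scaled exact subgraph constraint (SESC) for the subgraph of `G` induced by `I`. -/
def sescFeas {n : ℕ} (G : SimpleGraph (Fin n)) (X : Matrix (Fin n) (Fin n) ℝ)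
    (I : Finset (Fin n)) : Prop :=
  subMat X I ∈ sstab2 (G.induce (I : Set (Fin n)))

/-- `z^E_J(G)`: optimal value of (Tn+1) with the ESCs for all `I ∈ J`. -/
def zE {n : ℕ} (G : SimpleGraph (Fin n)) (J : Set (Finset (Fin n))) : ℝ :=
  sSup { r | ∃ x X, (x, X) ∈ th2 G ∧ (∀ I ∈ J, escFeas G X I) ∧ r = ∑ i, x i }

/-- `z^C_J(G)`: optimal value of (Tn) with the ESCs for all `I ∈ J`. -/
def zC {n : ℕ} (G : SimpleGraph (Fin n)) (J : Set (Finset (Fin n))) : ℝ :=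
  sSup { r | ∃ X, X ∈ cth2 G ∧ (∀ I ∈ J, escFeas G X I) ∧ r = ∑ i, ∑ j, X i j }

/-- `z^S_J(G)`: optimal value of (Tn) with the SESCs for all `I ∈ J`. -/
def zS {n : ℕ} (G : SimpleGraph (Fin n)) (J : Set (Finset (Fin n))) : ℝ :=
  sSup { r | ∃ X, X ∈ cth2 G ∧ (∀ I ∈ J, sescFeas G X I) ∧ r = ∑ i, ∑ j, X i j }

/-- The collection `J_k` of all vertex subsets of cardinality `k`. -/
def Jk (n k : ℕ) : Set (Finset (Fin n)) := { I | I.card = k }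

open Finset in
/-- KEY: a nonnegatively scaled stable outer product with small trace lies in `sstab2`. -/
lemma key_mem {W : Type*} [Fintype W] (H : SimpleGraph W) {t : W → ℝ} (ht : IsStableVec H t)
    {c : ℝ} (hc : 0 ≤ c) (hc1 : c * ∑ k, t k * t k ≤ 1) :
    c • Matrix.vecMulVec t t ∈ sstab2 H := by
  by_cases h0 : t = 0
  · subst h0
    have hz : Matrix.vecMulVec (0 : W → ℝ) (0 : W → ℝ) = (0 : Matrix W W ℝ) := by
      ext i j; simp [Matrix.vecMulVec_apply]
    rw [hz, smul_zero]
    exact subset_convexHull ℝ _ (Set.mem_union_right _ rfl)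
  · set d := ∑ k, t k * t k with hd
    have hdpos : 0 < d := by
      obtain ⟨k, hk⟩ := Function.ne_iff.mp h0
      refine Finset.sum_pos' (fun k _ => mul_self_nonneg _) ⟨k, Finset.mem_univ _, ?_⟩
      rcases ht.1 k with h | h
      · exact absurd h hk
      · simp [h]
    have hmem0 : (0 : Matrix W W ℝ) ∈ sstab2 H :=
      subset_convexHull ℝ _ (Set.mem_union_right _ rfl)
    have hmemg : d⁻¹ • Matrix.vecMulVec t t ∈ sstab2 H :=
      subset_convexHull ℝ _ (Set.mem_union_left _ ⟨t, ht, h0, rfl⟩)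
    have hcomb := (convex_convexHull ℝ _) hmemg hmem0 (mul_nonneg hc hdpos.le)
      (by linarith : (0:ℝ) ≤ 1 - c * d) (by ring)
    have heq : (c * d) • d⁻¹ • Matrix.vecMulVec t t + (1 - c * d) • (0 : Matrix W W ℝ)
        = c • Matrix.vecMulVec t t := by
      rw [smul_zero, add_zero, smul_smul, mul_assoc, mul_inv_cancel₀ hdpos.ne', mul_one]
    rwa [heq] at hcomb

open Finset in
lemma sum_comp_le {A B : Type*} [Fintype A] [Fintype B] [DecidableEq B] {e : A → B}
    (he : Function.Injective e) {g : B → ℝ} (hg : ∀ b, 0 ≤ g b) :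
    ∑ a, g (e a) ≤ ∑ b, g b := by
  rw [← Finset.sum_image (g := e) (f := g) (fun x _ y _ h => he h)]
  exact Finset.sum_le_sum_of_subset_of_nonneg (Finset.subset_univ _) (fun b _ _ => hg b)

lemma psd_diag {W : Type*} [Fintype W] [DecidableEq W] {M : Matrix W W ℝ}
    (h : M.PosSemidef) (i : W) : 0 ≤ M i i := by
  have := h.dotProduct_mulVec_nonneg (Pi.single i 1)
  simpa [single_dotProduct, Matrix.mulVec_single] using this

lemma psd_offdiag {W : Type*} [Fintype W] [DecidableEq W] {M : Matrix W W ℝ}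
    (h : M.PosSemidef) (i j : W) : M i j + M j i ≤ M i i + M j j := by
  have := h.dotProduct_mulVec_nonneg (Pi.single i 1 - Pi.single j 1)
  simp only [star_trivial, dotProduct_sub, sub_dotProduct, Matrix.mulVec_sub,
    Matrix.mulVec_single, single_dotProduct, Pi.sub_apply, mul_one,
    MulOpposite.op_one, one_smul, one_mul, Matrix.col_apply] at this
  linarith
lemma cth2_trace_sum {n : ℕ} {G : SimpleGraph (Fin n)} {X : Matrix (Fin n) (Fin n) ℝ}
    (hX : X ∈ cth2 G) : ∑ i, X i i = 1 := by
  simpa [Matrix.trace, Matrix.diag] using hX.2.1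

lemma cth2_sum_le {n : ℕ} {G : SimpleGraph (Fin n)} {X : Matrix (Fin n) (Fin n) ℝ}
    (hX : X ∈ cth2 G) : ∑ i, ∑ j, X i j ≤ (n : ℝ) := by
  have htr : ∑ i, X i i = 1 := cth2_trace_sum hX
  have h2 : ∑ i, ∑ j, (X i j + X j i) ≤ ∑ i, ∑ j, (X i i + X j j) :=
    Finset.sum_le_sum fun i _ => Finset.sum_le_sum fun j _ => psd_offdiag hX.2.2.2 i j
  have hL : ∑ i, ∑ j, (X i j + X j i) = 2 * ∑ i, ∑ j, X i j := by
    rw [two_mul]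
    simp only [Finset.sum_add_distrib]
    congr 1
    exact Finset.sum_comm
  have hR : ∑ i, ∑ j, (X i i + X j j) = 2 * (n : ℝ) := by
    simp only [Finset.sum_add_distrib, Finset.sum_const, Finset.card_univ, Fintype.card_fin,
      nsmul_eq_mul, ← Finset.sum_mul, htr]
    ring_nf
    rw [← Finset.mul_sum, htr]
    ring
  rw [hL, hR] at h2
  linarith

lemma sum_sum_smul_vmv {W : Type*} [Fintype W] (c : ℝ) (t : W → ℝ) :
    ∑ i, ∑ j, (c • Matrix.vecMulVec t t) i j = c * ((∑ i, t i) * (∑ j, t j)) := by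
  have h1 : ∀ i j : W, (c • Matrix.vecMulVec t t) i j = c * (t i * t j) := fun i j => rfl
  calc ∑ i, ∑ j, (c • Matrix.vecMulVec t t) i j = ∑ i, ∑ j, c * (t i * t j) := by
        simp only [h1]
    _ = c * ∑ i, ∑ j, t i * t j := by
        rw [Finset.mul_sum]
        exact Finset.sum_congr rfl fun i _ => (Finset.mul_sum _ _ _).symm
    _ = c * ((∑ i, t i) * (∑ j, t j)) := by rw [Finset.sum_mul_sum]
lemma sesc_mono {n : ℕ} (G : SimpleGraph (Fin n)) (X : Matrix (Fin n) (Fin n) ℝ)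
    {I I' : Finset (Fin n)} (hsub : I' ⊆ I) (h : sescFeas G X I) : sescFeas G X I' := by
  classical
  set e : ↥(I' : Set (Fin n)) → ↥(I : Set (Fin n)) :=
    fun p => ⟨p.1, Finset.mem_coe.mpr (hsub (Finset.mem_coe.mp p.2))⟩ with he
  have hinj : Function.Injective e := fun p q hpq => Subtype.ext (congrArg Subtype.val hpq : (e p).1 = (e q).1)
  let f : Matrix ↥(I : Set (Fin n)) ↥(I : Set (Fin n)) ℝ →ₗ[ℝ]
      Matrix ↥(I' : Set (Fin n)) ↥(I' : Set (Fin n)) ℝ :=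
    { toFun := fun M => M.submatrix e e
      map_add' := fun M N => by ext p q; simp [Matrix.submatrix_apply]
      map_smul' := fun c M => by ext p q; simp [Matrix.submatrix_apply] }
  have hbase : ({ M | ∃ s, IsStableVec (G.induce (I : Set (Fin n))) s ∧ s ≠ 0 ∧
        M = (∑ k, s k * s k)⁻¹ • Matrix.vecMulVec s s }
        ∪ {(0 : Matrix ↥(I : Set (Fin n)) ↥(I : Set (Fin n)) ℝ)})
      ⊆ f ⁻¹' (sstab2 (G.induce (I' : Set (Fin n)))) := by
    rintro M (⟨s, hs, hs0, rfl⟩ | rfl)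
    · rw [Set.mem_preimage]
      have heq : f ((∑ k, s k * s k)⁻¹ • Matrix.vecMulVec s s)
          = (∑ k, s k * s k)⁻¹ • Matrix.vecMulVec (s ∘ e) (s ∘ e) := by
        ext p q
        simp [f, Matrix.submatrix_apply, Matrix.vecMulVec_apply, Matrix.smul_apply]
      rw [heq]
      have hstable : IsStableVec (G.induce (I' : Set (Fin n))) (s ∘ e) :=
        ⟨fun p => hs.1 (e p), fun p q hadj => hs.2 (e p) (e q) hadj⟩
      refine key_mem _ hstable (inv_nonneg.mpr (Finset.sum_nonneg fun k _ => mul_self_nonneg _)) ?_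
      have hle : ∑ p, (s ∘ e) p * (s ∘ e) p ≤ ∑ k, s k * s k :=
        sum_comp_le hinj (fun k => mul_self_nonneg (s k))
      rcases eq_or_lt_of_le (Finset.sum_nonneg (fun k (_ : k ∈ Finset.univ) =>
          mul_self_nonneg (s k))) with hz | hpos
      · rw [← hz]
        simp
      · calc (∑ k, s k * s k)⁻¹ * ∑ p, (s ∘ e) p * (s ∘ e) p
            ≤ (∑ k, s k * s k)⁻¹ * ∑ k, s k * s k :=
              mul_le_mul_of_nonneg_left hle (inv_nonneg.mpr hpos.le)
          _ = 1 := inv_mul_cancel₀ hpos.ne'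
    · rw [Set.mem_preimage, map_zero]
      exact subset_convexHull ℝ _ (Set.mem_union_right _ rfl)
  have hmem := convexHull_min hbase ((convex_convexHull ℝ _).linear_preimage f) h
  rw [Set.mem_preimage] at hmem
  exact hmem
lemma sesc_empty {n : ℕ} (G : SimpleGraph (Fin n)) (X : Matrix (Fin n) (Fin n) ℝ) :
    sescFeas G X ∅ := by
  have : subMat X ∅ = 0 := by
    ext p q
    exact absurd p.2 (by simp)
  rw [sescFeas, this]
  exact subset_convexHull ℝ _ (Set.mem_union_right _ rfl)

lemma sesc_one {n : ℕ} {G : SimpleGraph (Fin n)} {X : Matrix (Fin n) (Fin n) ℝ}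
    (hX : X ∈ cth2 G) (i : Fin n) : sescFeas G X {i} := by
  have hpsd := hX.2.2.2
  have hd0 : 0 ≤ X i i := psd_diag hpsd i
  have hd1 : X i i ≤ 1 := by
    have := Finset.single_le_sum (f := fun j => X j j) (fun j _ => psd_diag hpsd j)
      (Finset.mem_univ i)
    rwa [cth2_trace_sum hX] at this
  have heq : subMat X {i} = (X i i) • Matrix.vecMulVec
      (fun _ : ↥(({i} : Finset (Fin n)) : Set (Fin n)) => (1:ℝ)) (fun _ => 1) := by
    ext p q
    have hp : (p : Fin n) = i := by simpa using p.2
    have hq : (q : Fin n) = i := by simpa using q.2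
    simp [subMat, Matrix.submatrix_apply, hp, hq, Matrix.vecMulVec_apply, Matrix.smul_apply]
  rw [sescFeas, heq]
  have hcard : (Finset.univ : Finset ↥(({i} : Finset (Fin n)) : Set (Fin n))).card = 1 := by
    simp [Finset.card_univ]
  refine key_mem _ ⟨fun _ => Or.inr rfl, fun p q hadj => ?_⟩ hd0 ?_
  · have hp : (p : Fin n) = i := by simpa using p.2
    have hq : (q : Fin n) = i := by simpa using q.2
    exact absurd (Subtype.ext (hp.trans hq.symm)) hadj.ne
  · simp [Finset.sum_const, hcard, hd1]
lemma sq_sum_eq {W : Type*} [Fintype W] {t : W → ℝ} (h : ∀ i, t i = 0 ∨ t i = 1) :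
    ∑ k, t k * t k = ∑ k, t k :=
  Finset.sum_congr rfl fun k _ => by rcases h k with h | h <;> simp [h]

lemma sum_pos_of_ne {W : Type*} [Fintype W] {t : W → ℝ} (h01 : ∀ i, t i = 0 ∨ t i = 1)
    (h0 : t ≠ 0) : 0 < ∑ k, t k := by
  obtain ⟨k, hk⟩ := Function.ne_iff.mp h0
  refine Finset.sum_pos' (fun k _ => ?_) ⟨k, Finset.mem_univ _, ?_⟩
  · rcases h01 k with h | h <;> simp [h]
  · rcases h01 k with h | h
    · exact absurd h hk
    · simp [h]

lemma xstar_cth2 {n : ℕ} {G : SimpleGraph (Fin n)} {s₀ : Fin n → ℝ} (hs₀ : IsStableVec G s₀)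
    {a : ℝ} (hsum : a = ∑ i, s₀ i) (hapos : 0 < a) :
    a⁻¹ • Matrix.vecMulVec s₀ s₀ ∈ cth2 G := by
  have hsq : ∑ i, s₀ i * s₀ i = a := by rw [sq_sum_eq hs₀.1, ← hsum]
  refine ⟨?_, ?_, ?_, Matrix.PosSemidef.of_dotProduct_mulVec_nonneg ?_ ?_⟩
  · ext i j
    simp only [Matrix.transpose_apply, Matrix.smul_apply, Matrix.vecMulVec_apply,
      smul_eq_mul]
    ring
  · rw [Matrix.trace_smul]
    have : Matrix.trace (Matrix.vecMulVec s₀ s₀) = ∑ i, s₀ i * s₀ i := by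
      simp [Matrix.trace, Matrix.diag, Matrix.vecMulVec_apply]
    rw [this, hsq, smul_eq_mul, inv_mul_cancel₀ hapos.ne']
  · intro i j hadj
    simp only [Matrix.smul_apply, Matrix.vecMulVec_apply, smul_eq_mul, hs₀.2 i j hadj, mul_zero]
  · ext i j
    simp only [Matrix.conjTranspose_apply, Matrix.smul_apply, Matrix.vecMulVec_apply,
      smul_eq_mul, star_trivial]
    ring
  · intro x
    have h1 : (Matrix.vecMulVec s₀ s₀) *ᵥ x = fun i => s₀ i * (s₀ ⬝ᵥ x) := by
      funext i
      simp [Matrix.mulVec, dotProduct, Matrix.vecMulVec_apply, Finset.mul_sum, mul_assoc]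
    have h2 : star x ⬝ᵥ (a⁻¹ • Matrix.vecMulVec s₀ s₀) *ᵥ x = a⁻¹ * ((s₀ ⬝ᵥ x) * (s₀ ⬝ᵥ x)) := by
      rw [Matrix.smul_mulVec, dotProduct_smul, h1]
      simp only [star_trivial, smul_eq_mul, dotProduct]
      congr 1
      rw [Finset.sum_mul]
      exact Finset.sum_congr rfl fun i _ => by ring
    rw [h2]
    exact mul_nonneg (inv_nonneg.mpr hapos.le) (mul_self_nonneg _)
lemma xstar_sesc {n : ℕ} {G : SimpleGraph (Fin n)} {s₀ : Fin n → ℝ} (hs₀ : IsStableVec G s₀)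
    {a : ℝ} (hsum : a = ∑ i, s₀ i) (hapos : 0 < a) (I : Finset (Fin n)) :
    sescFeas G (a⁻¹ • Matrix.vecMulVec s₀ s₀) I := by
  have hsq : ∑ i, s₀ i * s₀ i = a := by rw [sq_sum_eq hs₀.1, ← hsum]
  have heq : subMat (a⁻¹ • Matrix.vecMulVec s₀ s₀) I
      = a⁻¹ • Matrix.vecMulVec (fun p : ↥(I : Set (Fin n)) => s₀ p.1) (fun p : ↥(I : Set (Fin n)) => s₀ p.1) := by
    ext p q
    simp [subMat, Matrix.submatrix_apply, Matrix.vecMulVec_apply, Matrix.smul_apply]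
  rw [sescFeas, heq]
  have hstable : IsStableVec (G.induce (I : Set (Fin n)))
      (fun p : ↥(I : Set (Fin n)) => s₀ p.1) :=
    ⟨fun p => hs₀.1 p.1, fun p q hadj => hs₀.2 p.1 q.1 hadj⟩
  refine key_mem _ hstable (inv_nonneg.mpr hapos.le) ?_
  have hle : ∑ p : ↥(I : Set (Fin n)), s₀ p.1 * s₀ p.1 ≤ ∑ i, s₀ i * s₀ i :=
    sum_comp_le (Subtype.val_injective) (fun i => mul_self_nonneg (s₀ i))
  rw [hsq] at hle
  calc a⁻¹ * ∑ p : ↥(I : Set (Fin n)), s₀ p.1 * s₀ p.1 ≤ a⁻¹ * a :=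
        mul_le_mul_of_nonneg_left hle (inv_nonneg.mpr hapos.le)
    _ = 1 := inv_mul_cancel₀ hapos.ne'

lemma xstar_val {n : ℕ} {s₀ : Fin n → ℝ} {a : ℝ} (hsum : a = ∑ i, s₀ i) (hapos : 0 < a) :
    ∑ i, ∑ j, (a⁻¹ • Matrix.vecMulVec s₀ s₀) i j = a := by
  rw [sum_sum_smul_vmv, ← hsum, ← mul_assoc, inv_mul_cancel₀ hapos.ne', one_mul]
/-- properties of the scaled exact subgraph hierarchy:
`ϑ(G) = z^S_0(G) = z^S_1(G)`, the levels are monotone nonincreasing, and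
`z^S_n(G) = α(G)`. -/
theorem stmt11 {n : ℕ} (hn : 1 ≤ n) (G : SimpleGraph (Fin n)) (a : ℝ)
    (ha : IsGreatest { r | ∃ s, IsStableVec G s ∧ r = ∑ i, s i } a) :
    sSup { r | ∃ X, X ∈ cth2 G ∧ r = ∑ i, ∑ j, X i j } = zS G (Jk n 0) ∧
    zS G (Jk n 0) = zS G (Jk n 1) ∧
    (∀ k, 1 ≤ k → k ≤ n → zS G (Jk n k) ≤ zS G (Jk n (k - 1))) ∧
    zS G (Jk n n) = a := by
  classical
  obtain ⟨⟨s₀, hs₀, hsum⟩, hub⟩ := ha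
  -- a ≥ 1 > 0
  have ha1 : (1 : ℝ) ≤ a := by
    set v : Fin n := ⟨0, hn⟩
    have hvert : IsStableVec G (Pi.single v 1) := by
      constructor
      · intro i
        by_cases h : i = v <;> simp [Pi.single_apply, h]
      · intro i j hadj
        by_cases h : i = v
        · have : j ≠ v := fun hj => hadj.ne (h.trans hj.symm)
          simp [Pi.single_apply, this]
        · simp [Pi.single_apply, h]
    exact hub ⟨Pi.single v 1, hvert, by simp⟩
  have hapos : (0 : ℝ) < a := one_pos.trans_le ha1
  set Xs : Matrix (Fin n) (Fin n) ℝ := a⁻¹ • Matrix.vecMulVec s₀ s₀ with hXsdef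
  have hXscth : Xs ∈ cth2 G := xstar_cth2 hs₀ hsum hapos
  have hXssesc : ∀ I : Finset (Fin n), sescFeas G Xs I := xstar_sesc hs₀ hsum hapos
  have hXsval : ∑ i, ∑ j, Xs i j = a := xstar_val hsum hapos
  -- trivial constraint-set rewritings
  have hset0 : { r | ∃ X, X ∈ cth2 G ∧ (∀ I ∈ Jk n 0, sescFeas G X I) ∧ r = ∑ i, ∑ j, X i j }
      = { r | ∃ X, X ∈ cth2 G ∧ r = ∑ i, ∑ j, X i j } := by
    ext r
    constructor
    · rintro ⟨X, hX, -, hr⟩; exact ⟨X, hX, hr⟩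
    · rintro ⟨X, hX, hr⟩
      refine ⟨X, hX, fun I hI => ?_, hr⟩
      rw [Finset.card_eq_zero.mp hI]
      exact sesc_empty G X
  have hset1 : { r | ∃ X, X ∈ cth2 G ∧ (∀ I ∈ Jk n 1, sescFeas G X I) ∧ r = ∑ i, ∑ j, X i j }
      = { r | ∃ X, X ∈ cth2 G ∧ r = ∑ i, ∑ j, X i j } := by
    ext r
    constructor
    · rintro ⟨X, hX, -, hr⟩; exact ⟨X, hX, hr⟩
    · rintro ⟨X, hX, hr⟩
      refine ⟨X, hX, fun I hI => ?_, hr⟩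
      obtain ⟨i, rfl⟩ := Finset.card_eq_one.mp hI
      exact sesc_one hX i
  refine ⟨by rw [zS, hset0], by rw [zS, zS, hset0, hset1], ?_, ?_⟩
  · -- monotonicity
    intro k hk1 hkn
    apply csSup_le_csSup
    · exact ⟨(n : ℝ), by rintro r ⟨X, hX, -, rfl⟩; exact cth2_sum_le hX⟩
    · exact ⟨a, Xs, hXscth, fun I _ => hXssesc I, hXsval.symm⟩
    · rintro r ⟨X, hX, hf, hr⟩
      refine ⟨X, hX, fun I' hI' => ?_, hr⟩
      obtain ⟨I, hsub, hcard⟩ := Finset.exists_superset_card_eq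
        (show I'.card ≤ k from hI' ▸ Nat.sub_le k 1)
        (by simpa [Fintype.card_fin] using hkn)
      exact sesc_mono G X hsub (hf I hcard)
  · -- level n equals alpha
    refine IsGreatest.csSup_eq ⟨⟨Xs, hXscth, fun I _ => hXssesc I, hXsval.symm⟩, ?_⟩
    rintro r ⟨X, hX, hfeas, rfl⟩
    have huniv : sescFeas G X Finset.univ := hfeas _ (by simp [Jk])
    set T := ↥((Finset.univ : Finset (Fin n)) : Set (Fin n)) with hT
    set e : Fin n → T := fun i => ⟨i, by simp⟩ with hedef
    have hbij : Function.Bijective e :=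
      ⟨fun i j h => congrArg Subtype.val h, fun p => ⟨p.1, Subtype.ext rfl⟩⟩
    set L : Matrix T T ℝ → ℝ := fun M => ∑ p, ∑ q, M p q with hLdef
    have hLlin : IsLinearMap ℝ L := by
      constructor
      · intro M N; simp [hLdef, Finset.sum_add_distrib]
      · intro c M; simp [hLdef, Finset.mul_sum]
    have hhalf : sstab2 (G.induce ((Finset.univ : Finset (Fin n)) : Set (Fin n)))
        ⊆ { M | L M ≤ a } := by
      refine convexHull_min ?_ (convex_halfSpace_le hLlin a)
      rintro M (⟨t, ht, ht0, rfl⟩ | rfl)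
      · have hsq : ∑ k, t k * t k = ∑ k, t k := sq_sum_eq ht.1
        have hpos : 0 < ∑ k, t k := sum_pos_of_ne ht.1 ht0
        have hval : L ((∑ k, t k * t k)⁻¹ • Matrix.vecMulVec t t) = ∑ k, t k := by
          show ∑ p : T, ∑ q : T, ((∑ k, t k * t k)⁻¹ • Matrix.vecMulVec t t) p q = ∑ k, t k
          rw [sum_sum_smul_vmv, hsq, ← mul_assoc, inv_mul_cancel₀ hpos.ne', one_mul]
        have hstable : IsStableVec G (fun i => t (e i)) :=
          ⟨fun i => ht.1 (e i), fun i j hadj => ht.2 (e i) (e j) hadj⟩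
        have hsum' : ∑ i, t (e i) = ∑ p, t p :=
          Fintype.sum_bijective e hbij _ _ (fun i => rfl)
        have hle : ∑ i, t (e i) ≤ a := hub ⟨fun i => t (e i), hstable, rfl⟩
        show L _ ≤ a
        rw [hval, ← hsum']
        exact hle
      · show L 0 ≤ a
        have : L 0 = 0 := by simp [hLdef]
        rw [this]; linarith
    have hXL : ∑ i, ∑ j, X i j = L (subMat X Finset.univ) := by
      show ∑ i, ∑ j, X i j = ∑ p : T, ∑ q : T, subMat X Finset.univ p q
      have h1 : ∀ p : T, ∑ j, X p.1 j = ∑ q : T, subMat X Finset.univ p q := fun p =>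
        Fintype.sum_bijective e hbij _ _ (fun j => rfl)
      calc ∑ i, ∑ j, X i j = ∑ p : T, ∑ j, X p.1 j :=
            Fintype.sum_bijective e hbij _ _ (fun i => rfl)
        _ = ∑ p : T, ∑ q : T, subMat X Finset.univ p q := Finset.sum_congr rfl fun p _ => h1 p
    rw [hXL]
    exact hhalf huniv
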